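/- arXiv:1903.10402 — 3 statements merged into one kernel-verified Lean document; each statement's English description precedes it below -/
import Mathlib

section
/- For the asymmetric algorithm: in every fair execution, if at some point the shared variable turn is assigned the value i (by the coordinator moving from state 2.1 to 2.2) while process p_i is in state 2, then process p_i eventually enters the critical section, and no other process enters the critical section before it does. -/
/-!
Model of the asymmetric mutual-exclusion algorithm with a coordinator.

Shared variables:
* `turn : Option (Fin N)` where `none` stands for THINKING,
* `flag : Fin N → Flag` with values REMAINDER / WAITING.

Process `i` automaton: state 1 --(flag[i]:=WAITING)--> state 2
--(turn = i ⇒)--> critical section --(flag[i]:=REMAINDER)--> state 3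
--(turn := THINKING)--> state 4.

Coordinator automaton (local counter `p`, initially set to 0):
state 1 --(p:=0)--> state 2; state 2 --(flag[p]≠WAITING ⇒)--> state 3;
state 2 --(flag[p]=WAITING ⇒)--> state 2.1 --(turn:=p)--> state 2.2
--(turn=THINKING ⇒)--> state 3; state 3 --(p:=(p+1) mod N)--> state 2.
-/

namespace Asym

inductive Flag
  | remainder | waiting
  deriving DecidableEq

/-- Program counter of a process. -/
inductive PPC
  | s1 | s2 | cs | s3 | s4
  deriving DecidableEq

/-- Program counter of the coordinator. -/
inductive CPC
  | c1 | c2 | c21 | c22 | c3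
  deriving DecidableEq

/-- A global state. -/
structure St (N : ℕ) where
  /-- `none` encodes THINKING. -/
  turn : Option (Fin N)
  flag : Fin N → Flag
  pc : Fin N → PPC
  cpc : CPC
  p : Fin N

/-- The initial global state. -/
def initSt (N : ℕ) [NeZero N] : St N where
  turn := none
  flag := fun _ => .remainder
  pc := fun _ => .s1
  cpc := .c1
  p := 0

/-- Who takes a step: a process or the coordinator. -/
inductive Label (N : ℕ)
  | proc : Fin N → Label N
  | coord

/-- One enabled transition of a single agent. -/
inductive Step {N : ℕ} [NeZero N] : Label N → St N → St N → Prop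
  | p12 (s : St N) (i : Fin N) (h : s.pc i = .s1) :
      Step (.proc i) s { s with flag := Function.update s.flag i .waiting,
                                pc := Function.update s.pc i .s2 }
  | p2cs (s : St N) (i : Fin N) (h : s.pc i = .s2) (ht : s.turn = some i) :
      Step (.proc i) s { s with pc := Function.update s.pc i .cs }
  | pcs3 (s : St N) (i : Fin N) (h : s.pc i = .cs) :
      Step (.proc i) s { s with flag := Function.update s.flag i .remainder,
                                pc := Function.update s.pc i .s3 }
  | p34 (s : St N) (i : Fin N) (h : s.pc i = .s3) :
      Step (.proc i) s { s with turn := none,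
                                pc := Function.update s.pc i .s4 }
  | c12 (s : St N) (h : s.cpc = .c1) :
      Step .coord s { s with p := 0, cpc := .c2 }
  | c23 (s : St N) (h : s.cpc = .c2) (hf : s.flag s.p ≠ .waiting) :
      Step .coord s { s with cpc := .c3 }
  | c2_21 (s : St N) (h : s.cpc = .c2) (hf : s.flag s.p = .waiting) :
      Step .coord s { s with cpc := .c21 }
  | c21_22 (s : St N) (h : s.cpc = .c21) :
      Step .coord s { s with turn := some s.p, cpc := .c22 }
  | c22_3 (s : St N) (h : s.cpc = .c22) (ht : s.turn = none) :
      Step .coord s { s with cpc := .c3 }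
  | c3_2 (s : St N) (h : s.cpc = .c3) :
      Step .coord s { s with p := s.p + 1, cpc := .c2 }

/-- An execution: a sequence of global states starting from the initial
state, together with a schedule; at each instant either exactly one agent
takes one of its enabled transitions, or (if `none` is scheduled) the
state stutters. -/
structure Exec (N : ℕ) [NeZero N] where
  states : ℕ → St N
  sched : ℕ → Option (Label N)
  init : states 0 = initSt N
  step : ∀ n, match sched n with
    | some l => Step l (states n) (states (n + 1))
    | none => states (n + 1) = states n

/-- An agent is enabled if it can take a transition. -/
def Enabled {N : ℕ} [NeZero N] (l : Label N) (s : St N) : Prop :=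
  ∃ s', Step l s s'

/-- Weak fairness: an agent whose next transition is continuously enabled
eventually takes it. -/
def Exec.Fair {N : ℕ} [NeZero N] (e : Exec N) : Prop :=
  ∀ l n, (∀ m, n ≤ m → Enabled l (e.states m)) → ∃ m, n ≤ m ∧ e.sched m = some l

/-- A state is reachable if it occurs in some execution. -/
def Reachable {N : ℕ} [NeZero N] (s : St N) : Prop :=
  ∃ e : Exec N, ∃ n, e.states n = s

end Asym


namespace Asym

/-- Global invariant: if the coordinator is not at c22 then `turn` is
THINKING, and any process in the CS or at s3 holds the turn. -/
def Inv {N : ℕ} (s : St N) : Prop :=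
  (s.cpc ≠ CPC.c22 → s.turn = none) ∧
  (∀ j, s.pc j = PPC.cs ∨ s.pc j = PPC.s3 → s.turn = some j)

lemma step_inv {N : ℕ} [NeZero N] {l : Label N} {s s' : St N}
    (h : Step l s s') (hs : Inv s) : Inv s' := by
  obtain ⟨h1, h2⟩ := hs
  cases h with
  | p12 s i hpc =>
    refine ⟨h1, fun j hj => ?_⟩
    apply h2 j
    by_cases hji : j = i <;> simp_all [Function.update]
  | p2cs s i hpc ht =>
    refine ⟨fun hc => (absurd (h1 hc)) (by simp [ht]), fun j hj => ?_⟩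
    by_cases hji : j = i
    · simp [hji, ht]
    · simp only [Function.update, dif_neg hji] at hj
      exact h2 j hj
  | pcs3 s i hpc =>
    refine ⟨h1, fun j hj => ?_⟩
    apply h2 j
    by_cases hji : j = i <;> simp_all [Function.update]
  | p34 s i hpc =>
    refine ⟨fun _ => rfl, fun j hj => ?_⟩
    exfalso
    have hji : j ≠ i := by
      intro hji; subst hji; simp [Function.update] at hj
    simp only [Function.update, dif_neg hji] at hj
    have := h2 j hj
    have := h2 i (Or.inr hpc)
    simp_all
  | c12 s hc =>
    refine ⟨fun _ => h1 (by simp [hc]), fun j hj => h2 j hj⟩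
  | c23 s hc hf =>
    refine ⟨fun _ => h1 (by simp [hc]), fun j hj => h2 j hj⟩
  | c2_21 s hc hf =>
    refine ⟨fun _ => h1 (by simp [hc]), fun j hj => h2 j hj⟩
  | c21_22 s hc =>
    refine ⟨fun hc' => absurd rfl hc', fun j hj => ?_⟩
    exfalso
    have := h2 j hj
    have := h1 (by simp [hc])
    simp_all
  | c22_3 s hc ht =>
    refine ⟨fun _ => ht, fun j hj => ?_⟩
    exfalso
    have := h2 j hj
    simp_all
  | c3_2 s hc =>
    refine ⟨fun _ => h1 (by simp [hc]), fun j hj => h2 j hj⟩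

lemma exec_inv {N : ℕ} [NeZero N] (e : Exec N) : ∀ k, Inv (e.states k) := by
  intro k
  induction k with
  | zero =>
    rw [e.init]
    exact ⟨fun _ => rfl, fun j hj => by simp [initSt] at hj⟩
  | succ k ih =>
    have hstep := e.step k
    cases hsc : e.sched k with
    | none => rw [hsc] at hstep; simp only [hstep]; exact ih
    | some l => rw [hsc] at hstep; exact step_inv hstep ih

/-- Determinism of the coordinator step from c21. -/
lemma coord_c21_step {N : ℕ} [NeZero N] {s s' : St N}
    (h : Step Label.coord s s') (hc : s.cpc = CPC.c21) :
    s' = { s with turn := some s.p, cpc := CPC.c22 } := by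
  cases h <;> simp_all

/-- Determinism of a process step from s2. -/
lemma proc_s2_step {N : ℕ} [NeZero N] {s s' : St N} {i : Fin N}
    (h : Step (Label.proc i) s s') (hpc : s.pc i = PPC.s2) :
    s' = { s with pc := Function.update s.pc i PPC.cs } := by
  cases h <;> simp_all

/-- Local stability: while process `i` holds the turn and sits at s2, any
step by another agent preserves this. -/
lemma P_preserve {N : ℕ} [NeZero N] {s s' : St N} {i : Fin N} {l : Label N}
    (h : Step l s s') (hinv : Inv s)
    (ht : s.turn = some i) (hpc : s.pc i = PPC.s2)
    (hl : l ≠ Label.proc i) :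
    s'.turn = some i ∧ s'.pc i = PPC.s2 := by
  obtain ⟨h1, h2⟩ := hinv
  cases h with
  | p12 s j hj =>
    have hji : j ≠ i := by rintro rfl; simp_all
    refine ⟨ht, ?_⟩
    show Function.update s.pc j PPC.s2 i = PPC.s2
    rw [Function.update_of_ne (Ne.symm hji)]
    exact hpc
  | p2cs s j hj ht' =>
    exfalso
    rw [ht] at ht'
    have : j = i := by injection ht'.symm
    exact hl (by rw [this])
  | pcs3 s j hj =>
    exfalso
    have := h2 j (Or.inl hj)
    rw [ht] at this
    have : i = j := by injection this
    exact hl (by rw [this])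
  | p34 s j hj =>
    exfalso
    have := h2 j (Or.inr hj)
    rw [ht] at this
    have : i = j := by injection this
    exact hl (by rw [this])
  | c12 s hc => exact absurd (h1 (by simp [hc])) (by simp [ht])
  | c23 s hc hf => exact absurd (h1 (by simp [hc])) (by simp [ht])
  | c2_21 s hc hf => exact absurd (h1 (by simp [hc])) (by simp [ht])
  | c21_22 s hc => exact absurd (h1 (by simp [hc])) (by simp [ht])
  | c22_3 s hc ht' => simp_all
  | c3_2 s hc => exact absurd (h1 (by simp [hc])) (by simp [ht])

end Asym

open Asym in
/-- **Lemma: a process with the turn enters the critical section (asymmetric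
algorithm).** In every fair execution, if at some step the coordinator moves
from state 2.1 to state 2.2 (thereby assigning `turn := i`, where `i` is the
coordinator's counter value) while process `i` is in state 2, then process
`i` eventually enters the critical section, and no other process enters the
critical section before it does. -/
theorem asym_process_with_turn_enters {N : ℕ} [NeZero N] (e : Exec N)
    (hfair : e.Fair) (n : ℕ) (i : Fin N)
    (hsched : e.sched n = some Label.coord)
    (hcpc : (e.states n).cpc = CPC.c21)
    (hp : (e.states n).p = i)
    (hi : (e.states n).pc i = PPC.s2) :
    ∃ m, n < m ∧ (e.states m).pc i = PPC.cs ∧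
      ∀ j, j ≠ i → ∀ k, n ≤ k → k < m →
        ¬ ((e.states k).pc j ≠ PPC.cs ∧ (e.states (k + 1)).pc j = PPC.cs) := by
  -- The step at time n is the coordinator's c21 → c22 step, setting turn := i.
  have hstepn := e.step n
  rw [hsched] at hstepn
  have hn1 : e.states (n + 1)
      = { e.states n with turn := some (e.states n).p, cpc := CPC.c22 } :=
    coord_c21_step hstepn hcpc
  -- The key predicate.
  set P : ℕ → Prop := fun k =>
    (e.states k).turn = some i ∧ (e.states k).pc i = PPC.s2 with hP
  have hPn1 : P (n + 1) := by
    constructor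
    · rw [hn1]; simp [hp]
    · rw [hn1]; simpa using hi
  -- Preservation while i is not scheduled.
  have hpres : ∀ k, P k → e.sched k ≠ some (Label.proc i) → P (k + 1) := by
    intro k hPk hne
    have hstep := e.step k
    cases hsc : e.sched k with
    | none =>
      rw [hsc] at hstep
      have hstep' : e.states (k + 1) = e.states k := hstep
      exact ⟨by rw [hstep']; exact hPk.1, by rw [hstep']; exact hPk.2⟩
    | some l =>
      rw [hsc] at hstep
      have hl : l ≠ Label.proc i := by rintro rfl; exact hne hsc
      exact P_preserve hstep (exec_inv e k) hPk.1 hPk.2 hl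
  -- P implies i is enabled.
  have hen : ∀ k, P k → Enabled (Label.proc i) (e.states k) := by
    intro k hPk
    exact ⟨_, Step.p2cs (e.states k) i hPk.2 hPk.1⟩
  -- i is eventually scheduled after n+1.
  have hex : ∃ m, (n + 1 ≤ m ∧ e.sched m = some (Label.proc i)) := by
    by_contra hno
    push_neg at hno
    have hall : ∀ m, n + 1 ≤ m → P m := by
      intro m hm
      induction m with
      | zero => omega
      | succ m ih =>
        rcases Nat.lt_or_ge n m with hlt | hge
        · exact hpres m (ih hlt) (hno m hlt)
        · have : m = n := by omega
          subst this; exact hPn1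
    obtain ⟨m, hm, hm'⟩ := hfair (Label.proc i) (n + 1)
      (fun m hm => hen m (hall m hm))
    exact hno m hm hm'
  -- Take the least such m.
  classical
  set m := Nat.find hex with hmdef
  obtain ⟨hm1, hm2⟩ := Nat.find_spec hex
  -- P holds on [n+1, m].
  have hPall : ∀ k, n + 1 ≤ k → k ≤ m → P k := by
    intro k hk1 hk2
    induction k with
    | zero => omega
    | succ k ih =>
      rcases Nat.lt_or_ge n k with hlt | hge
      · refine hpres k (ih hlt (by omega)) ?_
        intro hsc
        exact Nat.find_min hex (show k < m by omega) ⟨by omega, hsc⟩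
      · have : k = n := by omega
        subst this; exact hPn1
  have hPm : P m := hPall m hm1 le_rfl
  -- The step at m puts i into the CS.
  have hstepm := e.step m
  rw [hm2] at hstepm
  have hm1' : e.states (m + 1)
      = { e.states m with pc := Function.update (e.states m).pc i PPC.cs } :=
    proc_s2_step hstepm hPm.2
  refine ⟨m + 1, by omega, by rw [hm1']; simp, ?_⟩
  -- No other process is ever in the CS in between.
  intro j hj k hk1 hk2
  rintro ⟨-, hcs⟩
  have hnotcs : ∀ k', n + 1 ≤ k' → k' ≤ m → (e.states k').pc j ≠ PPC.cs := by
    intro k' h1' h2' hcs'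
    have := (exec_inv e k').2 j (Or.inl hcs')
    rw [(hPall k' h1' h2').1] at this
    exact hj (by injection this.symm)
  rcases Nat.lt_or_ge (k + 1) (m + 1) with hlt | hge
  · exact hnotcs (k + 1) (by omega) (by omega) hcs
  · have : k + 1 = m + 1 := by omega
    rw [this, hm1'] at hcs
    simp only [Function.update, dif_neg hj] at hcs
    exact hnotcs m hm1 le_rfl hcs
end

section
/- Progress for the one-writer asymmetric algorithm: in every fair execution of the one-writer asymmetric algorithm, every process that is waiting in state 2 (having set flag[i]:=WAITING) eventually enters the critical section. -/
/-!
Model of the asymmetric mutual-exclusion algorithm using only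
one-writer/multiple-reader shared variables: `turn` is writable only by the
coordinator.

Process `i` automaton: state 1 --(flag[i]:=WAITING)--> state 2
--(turn = i ⇒)--> critical section --(flag[i]:=REMAINDER)--> state 3
--(turn ≠ i ⇒)--> state 4.

Coordinator automaton (local counter `p`, initially set to 0):
state 1 --(p:=0)--> state 2; state 2 --(flag[p]≠WAITING ⇒)--> state 3;
state 2 --(flag[p]=WAITING ⇒)--> state 2.1 --(turn:=p)--> state 2.2
--(flag[p]=REMAINDER ⇒ turn:=THINKING)--> state 3;
state 3 --(p:=(p+1) mod N)--> state 2.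
-/

namespace Asym1W

inductive Flag
  | remainder | waiting
  deriving DecidableEq

/-- Program counter of a process. -/
inductive PPC
  | s1 | s2 | cs | s3 | s4
  deriving DecidableEq

/-- Program counter of the coordinator. -/
inductive CPC
  | c1 | c2 | c21 | c22 | c3
  deriving DecidableEq

/-- A global state. -/
structure St (N : ℕ) where
  /-- `none` encodes THINKING. -/
  turn : Option (Fin N)
  flag : Fin N → Flag
  pc : Fin N → PPC
  cpc : CPC
  p : Fin N

/-- The initial global state. -/
def initSt (N : ℕ) [NeZero N] : St N where
  turn := none
  flag := fun _ => .remainder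
  pc := fun _ => .s1
  cpc := .c1
  p := 0

/-- Who takes a step: a process or the coordinator. -/
inductive Label (N : ℕ)
  | proc : Fin N → Label N
  | coord

/-- One enabled transition of a single agent. -/
inductive Step {N : ℕ} [NeZero N] : Label N → St N → St N → Prop
  | p12 (s : St N) (i : Fin N) (h : s.pc i = .s1) :
      Step (.proc i) s { s with flag := Function.update s.flag i .waiting,
                                pc := Function.update s.pc i .s2 }
  | p2cs (s : St N) (i : Fin N) (h : s.pc i = .s2) (ht : s.turn = some i) :
      Step (.proc i) s { s with pc := Function.update s.pc i .cs }
  | pcs3 (s : St N) (i : Fin N) (h : s.pc i = .cs) :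
      Step (.proc i) s { s with flag := Function.update s.flag i .remainder,
                                pc := Function.update s.pc i .s3 }
  | p34 (s : St N) (i : Fin N) (h : s.pc i = .s3) (ht : s.turn ≠ some i) :
      Step (.proc i) s { s with pc := Function.update s.pc i .s4 }
  | c12 (s : St N) (h : s.cpc = .c1) :
      Step .coord s { s with p := 0, cpc := .c2 }
  | c23 (s : St N) (h : s.cpc = .c2) (hf : s.flag s.p ≠ .waiting) :
      Step .coord s { s with cpc := .c3 }
  | c2_21 (s : St N) (h : s.cpc = .c2) (hf : s.flag s.p = .waiting) :
      Step .coord s { s with cpc := .c21 }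
  | c21_22 (s : St N) (h : s.cpc = .c21) :
      Step .coord s { s with turn := some s.p, cpc := .c22 }
  | c22_3 (s : St N) (h : s.cpc = .c22) (hf : s.flag s.p = .remainder) :
      Step .coord s { s with turn := none, cpc := .c3 }
  | c3_2 (s : St N) (h : s.cpc = .c3) :
      Step .coord s { s with p := s.p + 1, cpc := .c2 }

/-- An execution: a sequence of global states starting from the initial
state, together with a schedule; at each instant either exactly one agent
takes one of its enabled transitions, or (if `none` is scheduled) the
state stutters. -/
structure Exec (N : ℕ) [NeZero N] where
  states : ℕ → St N
  sched : ℕ → Option (Label N)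
  init : states 0 = initSt N
  step : ∀ n, match sched n with
    | some l => Step l (states n) (states (n + 1))
    | none => states (n + 1) = states n

/-- An agent is enabled if it can take a transition. -/
def Enabled {N : ℕ} [NeZero N] (l : Label N) (s : St N) : Prop :=
  ∃ s', Step l s s'

/-- Weak fairness: an agent whose next transition is continuously enabled
eventually takes it. -/
def Exec.Fair {N : ℕ} [NeZero N] (e : Exec N) : Prop :=
  ∀ l n, (∀ m, n ≤ m → Enabled l (e.states m)) → ∃ m, n ≤ m ∧ e.sched m = some l

/-- A state is reachable if it occurs in some execution. -/
def Reachable {N : ℕ} [NeZero N] (s : St N) : Prop :=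
  ∃ e : Exec N, ∃ n, e.states n = s

end Asym1W

namespace Asym1W

variable {N : ℕ} [NeZero N]

/-- Frame: coordinator steps do not change `pc` or `flag`. -/
lemma coord_frame {s s' : St N} (h : Step .coord s s') :
    s'.pc = s.pc ∧ s'.flag = s.flag := by
  cases h <;> simp

/-- Frame: a step of process `j` does not change `turn`, `cpc`, `p`,
nor the `pc`/`flag` of other processes. -/
lemma proc_frame {j : Fin N} {s s' : St N} (h : Step (.proc j) s s') :
    s'.turn = s.turn ∧ s'.cpc = s.cpc ∧ s'.p = s.p ∧
      ∀ k, k ≠ j → s'.pc k = s.pc k ∧ s'.flag k = s.flag k := by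
  cases h <;>
    refine ⟨rfl, rfl, rfl, fun k hk => ?_⟩ <;>
    simp [Function.update_of_ne hk]

lemma step_of_s1 {s s' : St N} {j : Fin N} (h : Step (.proc j) s s')
    (hpc : s.pc j = .s1) :
    s' = { s with flag := Function.update s.flag j .waiting,
                  pc := Function.update s.pc j .s2 } := by
  cases h <;> simp_all

lemma step_of_s2 {s s' : St N} {j : Fin N} (h : Step (.proc j) s s')
    (hpc : s.pc j = .s2) :
    s.turn = some j ∧ s' = { s with pc := Function.update s.pc j .cs } := by
  cases h <;> simp_all

lemma step_of_cs {s s' : St N} {j : Fin N} (h : Step (.proc j) s s')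
    (hpc : s.pc j = .cs) :
    s' = { s with flag := Function.update s.flag j .remainder,
                  pc := Function.update s.pc j .s3 } := by
  cases h <;> simp_all

lemma step_of_s3 {s s' : St N} {j : Fin N} (h : Step (.proc j) s s')
    (hpc : s.pc j = .s3) :
    s' = { s with pc := Function.update s.pc j .s4 } := by
  cases h <;> simp_all

lemma step_of_s4 {s s' : St N} {j : Fin N} (h : Step (.proc j) s s')
    (hpc : s.pc j = .s4) : False := by
  cases h <;> simp_all

lemma step_of_c1 {s s' : St N} (h : Step .coord s s') (hc : s.cpc = .c1) :
    s' = { s with p := 0, cpc := .c2 } := by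
  cases h <;> simp_all

lemma step_of_c2 {s s' : St N} (h : Step .coord s s') (hc : s.cpc = .c2) :
    (s.flag s.p ≠ .waiting ∧ s' = { s with cpc := .c3 }) ∨
    (s.flag s.p = .waiting ∧ s' = { s with cpc := .c21 }) := by
  cases h <;> simp_all

lemma step_of_c21 {s s' : St N} (h : Step .coord s s') (hc : s.cpc = .c21) :
    s' = { s with turn := some s.p, cpc := .c22 } := by
  cases h <;> simp_all

lemma step_of_c22 {s s' : St N} (h : Step .coord s s') (hc : s.cpc = .c22) :
    s.flag s.p = .remainder ∧ s' = { s with turn := none, cpc := .c3 } := by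
  cases h <;> simp_all

lemma step_of_c3 {s s' : St N} (h : Step .coord s s') (hc : s.cpc = .c3) :
    s' = { s with p := s.p + 1, cpc := .c2 } := by
  cases h <;> simp_all

/-- The global invariant. -/
def Inv (s : St N) : Prop :=
  (∀ j, s.flag j = .waiting ↔ (s.pc j = .s2 ∨ s.pc j = .cs)) ∧
  (s.cpc = .c22 → s.turn = some s.p) ∧
  (s.cpc ≠ .c22 → s.turn = none) ∧
  ((s.cpc = .c21 ∨ s.cpc = .c22) → s.pc s.p ≠ .s1)

lemma Inv_step {l : Label N} {s s' : St N} (h : Step l s s') (hI : Inv s) :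
    Inv s' := by
  obtain ⟨hA, hB, hC, hD⟩ := hI
  cases h with
  | p12 s j hpc =>
    refine ⟨fun k => ?_, hB, hC, fun hc => ?_⟩
    · rcases eq_or_ne k j with rfl | hk
      · simp
      · simpa [Function.update_of_ne hk] using hA k
    · rcases eq_or_ne s.p j with hpj | hpj
      · intro h1
        simp only at h1
        rw [hpj, Function.update_self] at h1
        simp at h1
      · simpa [Function.update_of_ne hpj] using hD hc
  | p2cs s j hpc ht =>
    refine ⟨fun k => ?_, hB, hC, fun hc => ?_⟩
    · rcases eq_or_ne k j with rfl | hk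
      · simpa [hpc] using hA k
      · simpa [Function.update_of_ne hk] using hA k
    · rcases eq_or_ne s.p j with hpj | hpj
      · intro h1
        simp only at h1
        rw [hpj, Function.update_self] at h1
        simp at h1
      · simpa [Function.update_of_ne hpj] using hD hc
  | pcs3 s j hpc =>
    refine ⟨fun k => ?_, hB, hC, fun hc => ?_⟩
    · rcases eq_or_ne k j with rfl | hk
      · simp
      · simpa [Function.update_of_ne hk] using hA k
    · rcases eq_or_ne s.p j with hpj | hpj
      · intro h1
        simp only at h1
        rw [hpj, Function.update_self] at h1
        simp at h1
      · simpa [Function.update_of_ne hpj] using hD hc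
  | p34 s j hpc ht =>
    refine ⟨fun k => ?_, hB, hC, fun hc => ?_⟩
    · rcases eq_or_ne k j with rfl | hk
      · simpa [hpc] using hA k
      · simpa [Function.update_of_ne hk] using hA k
    · rcases eq_or_ne s.p j with hpj | hpj
      · intro h1
        simp only at h1
        rw [hpj, Function.update_self] at h1
        simp at h1
      · simpa [Function.update_of_ne hpj] using hD hc
  | c12 s hc =>
    refine ⟨hA, by simp, fun _ => hC (by simp [hc]), by simp⟩
  | c23 s hc hf =>
    refine ⟨hA, by simp, fun _ => hC (by simp [hc]), by simp⟩
  | c2_21 s hc hf =>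
    refine ⟨hA, by simp, fun _ => hC (by simp [hc]), fun _ => ?_⟩
    intro h1
    simp only at h1
    have h2 := (hA s.p).mp hf
    rw [h1] at h2
    simp at h2
  | c21_22 s hc =>
    refine ⟨hA, fun _ => by simp, by simp, fun _ => hD (by simp [hc])⟩
  | c22_3 s hc hf =>
    exact ⟨hA, by simp, fun _ => rfl, by simp⟩
  | c3_2 s hc =>
    refine ⟨hA, by simp, fun _ => hC (by simp [hc]), by simp⟩

lemma step_or_eq (e : Exec N) (m : ℕ) :
    e.states (m + 1) = e.states m ∨
      ∃ l, e.sched m = some l ∧ Step l (e.states m) (e.states (m + 1)) := by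
  have h := e.step m
  cases hs : e.sched m with
  | none => rw [hs] at h; exact Or.inl h
  | some l => rw [hs] at h; exact Or.inr ⟨l, rfl, h⟩

lemma exec_inv (e : Exec N) : ∀ m, Inv (e.states m) := by
  intro m
  induction m with
  | zero =>
    rw [e.init]
    refine ⟨fun j => ?_, ?_, ?_, ?_⟩ <;> simp [initSt]
  | succ m ih =>
    rcases step_or_eq e m with heq | ⟨l, _, hst⟩
    · rw [heq]; exact ih
    · exact Inv_step hst ih

/-- Main fairness workhorse: if `P` holds now, is preserved by every step
other than one by agent `l`, and implies that `l` is enabled, then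
eventually `l` is scheduled in a state satisfying `P`. -/
lemma eventually (e : Exec N) (hf : e.Fair) (l : Label N) (P : St N → Prop)
    (n0 : ℕ) (h0 : P (e.states n0))
    (hpres : ∀ m, n0 ≤ m → P (e.states m) → ∀ l', l' ≠ l →
      e.sched m = some l' → Step l' (e.states m) (e.states (m + 1)) →
      P (e.states (m + 1)))
    (hen : ∀ m, n0 ≤ m → P (e.states m) → Enabled l (e.states m)) :
    ∃ m, n0 ≤ m ∧ e.sched m = some l ∧ P (e.states m) ∧
      Step l (e.states m) (e.states (m + 1)) := by
  classical
  have hper : ∀ m, n0 ≤ m → (∀ k, n0 ≤ k → k < m → e.sched k ≠ some l) →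
      P (e.states m) := by
    intro m
    induction m with
    | zero => intro hm _; exact (Nat.le_zero.mp hm) ▸ h0
    | succ m ih =>
      intro hm hk
      rcases eq_or_lt_of_le hm with heq | hlt
      · exact heq ▸ h0
      · have hm' : n0 ≤ m := Nat.lt_succ_iff.mp hlt
        have hP : P (e.states m) :=
          ih hm' (fun k h1 h2 => hk k h1 (Nat.lt_succ_of_lt h2))
        rcases step_or_eq e m with heq2 | ⟨l', hsc, hst⟩
        · rw [heq2]; exact hP
        · rcases eq_or_ne l' l with rfl | hne
          · exact absurd hsc (hk m hm' (Nat.lt_succ_self m))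
          · exact hpres m hm' hP l' hne hsc hst
  by_cases hex : ∃ m, n0 ≤ m ∧ e.sched m = some l
  · set m := Nat.find hex with hmdef
    obtain ⟨hm1, hm2⟩ := Nat.find_spec hex
    have hPm : P (e.states m) := by
      refine hper m hm1 (fun k h1 h2 hc => Nat.find_min hex h2 ⟨h1, hc⟩)
    have hst := e.step m
    rw [hm2] at hst
    exact ⟨m, hm1, hm2, hPm, hst⟩
  · push_neg at hex
    have hE : ∀ m, n0 ≤ m → Enabled l (e.states m) := fun m hm =>
      hen m hm (hper m hm (fun k h1 _ => hex k h1))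
    obtain ⟨m, hm, hsc⟩ := hf l n0 hE
    exact absurd hsc (hex m hm)

end Asym1W


open Asym1W in
/-- **Progress for the one-writer asymmetric algorithm.**
In every fair execution, every process that is waiting in state 2 (having
set `flag[i] := WAITING`) eventually enters the critical section. -/
theorem asym1w_progress {N : ℕ} [NeZero N] (e : Exec N) (hfair : e.Fair)
    (n : ℕ) (i : Fin N) (hi : (e.states n).pc i = PPC.s2) :
    ∃ m, n ≤ m ∧ (e.states m).pc i = PPC.cs := by
  by_contra H
  push_neg at H
  have hInv := exec_inv e
  -- process i stays in state s2 forever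
  have hs2 : ∀ m, n ≤ m → (e.states m).pc i = .s2 := by
    intro m hm
    induction m with
    | zero => exact (Nat.le_zero.mp hm) ▸ hi
    | succ m ih =>
      rcases eq_or_lt_of_le hm with heq | hlt
      · exact heq ▸ hi
      · have hm' : n ≤ m := Nat.lt_succ_iff.mp hlt
        have hP := ih hm'
        rcases step_or_eq e m with heq2 | ⟨l, hsc, hst⟩
        · rw [heq2]; exact hP
        · cases l with
          | coord => rw [(coord_frame hst).1]; exact hP
          | proc j =>
            rcases eq_or_ne j i with rfl | hj
            · obtain ⟨-, h'⟩ := step_of_s2 hst hP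
              exact absurd (by rw [h']; simp) (H (m + 1) hm)
            · rw [((proc_frame hst).2.2.2 i (Ne.symm hj)).1]; exact hP
  have hflagi : ∀ m, n ≤ m → (e.states m).flag i = .waiting := fun m hm =>
    ((hInv m).1 i).mpr (Or.inl (hs2 m hm))
  -- if turn = i ever, process i eventually enters the CS: contradiction
  have hwin : ∀ m, n ≤ m → (e.states m).turn = some i → False := by
    intro m hm ht
    obtain ⟨m', hm', hsc, hP, hstep⟩ := eventually e hfair (.proc i)
      (fun s => s.pc i = .s2 ∧ s.turn = some i) m ⟨hs2 m hm, ht⟩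
      (by
        intro k hk hPk l' hl' hsc' hst'
        cases l' with
        | proc j =>
          have hj : j ≠ i := fun h => hl' (by rw [h])
          obtain ⟨ht', -, -, hfr⟩ := proc_frame hst'
          exact ⟨by rw [(hfr i (Ne.symm hj)).1]; exact hPk.1,
                 by rw [ht']; exact hPk.2⟩
        | coord =>
          exfalso
          obtain ⟨hA, hB, hC, hD⟩ := hInv k
          have hc22 : (e.states k).cpc = .c22 := by
            by_contra hcc
            rw [hC hcc] at hPk; exact absurd hPk.2 (by simp)
          have hpi : (e.states k).p = i := by
            have h1 := hB hc22
            rw [hPk.2] at h1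
            exact (Option.some_injective _ h1).symm
          have h2 := (step_of_c22 hst' hc22).1
          rw [hpi] at h2
          have h3 := (hA i).mpr (Or.inl hPk.1)
          rw [h3] at h2
          exact absurd h2 (by simp))
      (fun k hk hPk => ⟨_, .p2cs _ i hPk.1 hPk.2⟩)
    obtain ⟨-, h'⟩ := step_of_s2 hstep hP.1
    exact H (m' + 1) (le_trans hm (Nat.le_succ_of_le hm'))
      (by rw [h']; simp)
  -- unblocking the coordinator from c22
  have hunblock : ∀ m, n ≤ m → (e.states m).cpc = .c22 →
      ∃ t, m ≤ t ∧ (e.states (t + 1)).cpc = .c3 ∧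
        (e.states (t + 1)).p = (e.states m).p := by
    intro m hm hc
    set q := (e.states m).p with hq
    have htq : (e.states m).turn = some q := (hInv m).2.1 hc
    have hqi : q ≠ i := fun h => hwin m hm (h ▸ htq)
    -- phase 3: flag q = remainder, coordinator can finish
    have h3 : ∀ t, m ≤ t → (e.states t).cpc = .c22 → (e.states t).p = q →
        (e.states t).flag q = .remainder →
        ((e.states t).pc q = .s3 ∨ (e.states t).pc q = .s4) →
        ∃ t', m ≤ t' ∧ (e.states (t' + 1)).cpc = .c3 ∧
          (e.states (t' + 1)).p = q := by
      intro t ht hc3 hp3 hf3 hpc3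
      obtain ⟨t', ht', hsc, hP, hstep⟩ := eventually e hfair .coord
        (fun s => s.cpc = .c22 ∧ s.p = q ∧ s.flag q = .remainder ∧
          (s.pc q = .s3 ∨ s.pc q = .s4)) t ⟨hc3, hp3, hf3, hpc3⟩
        (by
          intro k hk hPk l' hl' hsc' hst'
          cases l' with
          | coord => exact absurd rfl hl'
          | proc j =>
            obtain ⟨-, hcp, hpp, hfr⟩ := proc_frame hst'
            rcases eq_or_ne j q with rfl | hj
            · rcases hPk.2.2.2 with hs3 | hs4
              · have h' := step_of_s3 hst' hs3
                refine ⟨by rw [h']; exact hPk.1, by rw [h']; exact hPk.2.1,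
                        by rw [h']; exact hPk.2.2.1, Or.inr (by rw [h']; simp)⟩
              · exact absurd (step_of_s4 hst' hs4) (fun h => h)
            · obtain ⟨hpc', hfl'⟩ := hfr q (Ne.symm hj)
              exact ⟨by rw [hcp]; exact hPk.1, by rw [hpp]; exact hPk.2.1,
                     by rw [hfl']; exact hPk.2.2.1,
                     by rw [hpc']; exact hPk.2.2.2⟩)
        (fun k hk hPk => ⟨_, .c22_3 _ hPk.1 (hPk.2.1 ▸ hPk.2.2.1)⟩)
      obtain ⟨-, h'⟩ := step_of_c22 hstep hP.1
      exact ⟨t', le_trans ht ht', by rw [h'], by rw [h']; exact hP.2.1⟩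
    -- phase 2: process q in the critical section
    have h2 : ∀ t, m ≤ t → (e.states t).cpc = .c22 → (e.states t).p = q →
        (e.states t).pc q = .cs →
        ∃ t', m ≤ t' ∧ (e.states (t' + 1)).cpc = .c3 ∧
          (e.states (t' + 1)).p = q := by
      intro t ht hc3 hp3 hpc3
      obtain ⟨t', ht', hsc, hP, hstep⟩ := eventually e hfair (.proc q)
        (fun s => s.cpc = .c22 ∧ s.p = q ∧ s.pc q = .cs) t ⟨hc3, hp3, hpc3⟩
        (by
          intro k hk hPk l' hl' hsc' hst'
          cases l' with
          | coord =>
            exfalso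
            have hfq := (step_of_c22 hst' hPk.1).1
            rw [hPk.2.1] at hfq
            have := ((hInv k).1 q).mpr (Or.inr hPk.2.2)
            rw [this] at hfq
            exact absurd hfq (by simp)
          | proc j =>
            have hj : j ≠ q := fun h => hl' (by rw [h])
            obtain ⟨-, hcp, hpp, hfr⟩ := proc_frame hst'
            exact ⟨by rw [hcp]; exact hPk.1, by rw [hpp]; exact hPk.2.1,
                   by rw [(hfr q (Ne.symm hj)).1]; exact hPk.2.2⟩)
        (fun k hk hPk => ⟨_, .pcs3 _ q hPk.2.2⟩)
      have h' := step_of_cs hstep hP.2.2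
      refine h3 (t' + 1) (le_trans ht (Nat.le_succ_of_le ht'))
        (by rw [h']; exact hP.1) (by rw [h']; exact hP.2.1)
        (by rw [h']; simp) (Or.inl (by rw [h']; simp))
    -- phase 1: process q waiting in s2, with turn = q
    have h1 : ∀ t, m ≤ t → (e.states t).cpc = .c22 → (e.states t).p = q →
        (e.states t).pc q = .s2 →
        ∃ t', m ≤ t' ∧ (e.states (t' + 1)).cpc = .c3 ∧
          (e.states (t' + 1)).p = q := by
      intro t ht hc3 hp3 hpc3
      obtain ⟨t', ht', hsc, hP, hstep⟩ := eventually e hfair (.proc q)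
        (fun s => s.cpc = .c22 ∧ s.p = q ∧ s.pc q = .s2) t ⟨hc3, hp3, hpc3⟩
        (by
          intro k hk hPk l' hl' hsc' hst'
          cases l' with
          | coord =>
            exfalso
            have hfq := (step_of_c22 hst' hPk.1).1
            rw [hPk.2.1] at hfq
            have := ((hInv k).1 q).mpr (Or.inl hPk.2.2)
            rw [this] at hfq
            exact absurd hfq (by simp)
          | proc j =>
            have hj : j ≠ q := fun h => hl' (by rw [h])
            obtain ⟨-, hcp, hpp, hfr⟩ := proc_frame hst'
            exact ⟨by rw [hcp]; exact hPk.1, by rw [hpp]; exact hPk.2.1,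
                   by rw [(hfr q (Ne.symm hj)).1]; exact hPk.2.2⟩)
        (fun k hk hPk => ⟨_, .p2cs _ q hPk.2.2
          (by rw [← hPk.2.1]; exact (hInv k).2.1 hPk.1)⟩)
      obtain ⟨-, h'⟩ := step_of_s2 hstep hP.2.2
      refine h2 (t' + 1) (le_trans ht (Nat.le_succ_of_le ht'))
        (by rw [h']; exact hP.1) (by rw [h']; exact hP.2.1)
        (by rw [h']; simp)
    -- dispatch on pc q at time m
    have hne1 : (e.states m).pc q ≠ .s1 := (hInv m).2.2.2 (Or.inr hc)
    rcases hcase : (e.states m).pc q with h | h | h | h | h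
    · exact absurd hcase hne1
    · exact h1 m le_rfl hc rfl hcase
    · exact h2 m le_rfl hc rfl hcase
    · have hfq : (e.states m).flag q = .remainder := by
        cases hfc : (e.states m).flag q with
        | remainder => rfl
        | waiting =>
          rcases ((hInv m).1 q).mp hfc with h' | h' <;> rw [hcase] at h' <;>
            exact absurd h' (by simp)
      exact h3 m le_rfl hc rfl hfq (Or.inl hcase)
    · have hfq : (e.states m).flag q = .remainder := by
        cases hfc : (e.states m).flag q with
        | remainder => rfl
        | waiting =>
          rcases ((hInv m).1 q).mp hfc with h' | h' <;> rw [hcase] at h' <;>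
            exact absurd h' (by simp)
      exact h3 m le_rfl hc rfl hfq (Or.inr hcase)
  -- from c3 the coordinator reaches c2 with p incremented
  have hc3A : ∀ m, n ≤ m → (e.states m).cpc = .c3 →
      ∃ t, m ≤ t ∧ (e.states t).cpc = .c2 ∧
        (e.states t).p = (e.states m).p + 1 := by
    intro m hm hc
    obtain ⟨t, ht, hsc, hP, hstep⟩ := eventually e hfair .coord
      (fun s => s.cpc = .c3 ∧ s.p = (e.states m).p) m ⟨hc, rfl⟩
      (by
        intro k hk hPk l' hl' hsc' hst'
        cases l' with
        | coord => exact absurd rfl hl'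
        | proc j =>
          obtain ⟨-, hcp, hpp, -⟩ := proc_frame hst'
          exact ⟨by rw [hcp]; exact hPk.1, by rw [hpp]; exact hPk.2⟩)
      (fun k hk hPk => ⟨_, .c3_2 _ hPk.1⟩)
    have h' := step_of_c3 hstep hP.1
    exact ⟨t + 1, Nat.le_succ_of_le ht, by rw [h'],
      by rw [h']; simp [hP.2]⟩
  -- from c2 the coordinator reaches c2 again with p incremented
  have hc2A : ∀ m, n ≤ m → (e.states m).cpc = .c2 →
      ∃ t, m ≤ t ∧ (e.states t).cpc = .c2 ∧
        (e.states t).p = (e.states m).p + 1 := by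
    intro m hm hc
    obtain ⟨t, ht, hsc, hP, hstep⟩ := eventually e hfair .coord
      (fun s => s.cpc = .c2 ∧ s.p = (e.states m).p) m ⟨hc, rfl⟩
      (by
        intro k hk hPk l' hl' hsc' hst'
        cases l' with
        | coord => exact absurd rfl hl'
        | proc j =>
          obtain ⟨-, hcp, hpp, -⟩ := proc_frame hst'
          exact ⟨by rw [hcp]; exact hPk.1, by rw [hpp]; exact hPk.2⟩)
      (fun k hk hPk => by
        by_cases hw : (e.states k).flag (e.states k).p = .waiting
        · exact ⟨_, .c2_21 _ hPk.1 hw⟩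
        · exact ⟨_, .c23 _ hPk.1 hw⟩)
    rcases step_of_c2 hstep hP.1 with ⟨-, h'⟩ | ⟨-, h'⟩
    · -- went to c3
      obtain ⟨t2, ht2, hc2, hp2⟩ := hc3A (t + 1)
        (le_trans hm (Nat.le_succ_of_le ht)) (by rw [h'])
      refine ⟨t2, le_trans (Nat.le_succ_of_le ht) ht2, hc2, ?_⟩
      rw [hp2, h', hP.2]
    · -- went to c21
      obtain ⟨t2, ht2, hsc2, hP2, hstep2⟩ := eventually e hfair .coord
        (fun s => s.cpc = .c21 ∧ s.p = (e.states m).p) (t + 1)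
        (by rw [h']; exact ⟨rfl, hP.2⟩)
        (by
          intro k hk hPk l' hl' hsc' hst'
          cases l' with
          | coord => exact absurd rfl hl'
          | proc j =>
            obtain ⟨-, hcp, hpp, -⟩ := proc_frame hst'
            exact ⟨by rw [hcp]; exact hPk.1, by rw [hpp]; exact hPk.2⟩)
        (fun k hk hPk => ⟨_, .c21_22 _ hPk.1⟩)
      have h2' := step_of_c21 hstep2 hP2.1
      have hn2 : n ≤ t2 + 1 :=
        le_trans hm (le_trans (Nat.le_succ_of_le ht)
          (Nat.le_succ_of_le ht2))
      obtain ⟨t3, ht3, hc31, hp31⟩ := hunblock (t2 + 1) hn2 (by rw [h2'])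
      obtain ⟨t4, ht4, hc4, hp4⟩ := hc3A (t3 + 1)
        (le_trans hn2 (Nat.le_succ_of_le ht3)) hc31
      refine ⟨t4, by omega, hc4, ?_⟩
      rw [hp4, hp31, h2', hP2.2]
  -- reach c2 from the state at time n
  have hreach : ∃ t, n ≤ t ∧ (e.states t).cpc = .c2 := by
    rcases hcn : (e.states n).cpc with h | h | h | h | h
    · obtain ⟨t, ht, hsc, hP, hstep⟩ := eventually e hfair .coord
        (fun s => s.cpc = .c1) n hcn
        (by
          intro k hk hPk l' hl' hsc' hst'
          cases l' with
          | coord => exact absurd rfl hl'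
          | proc j => rw [(proc_frame hst').2.1]; exact hPk)
        (fun k hk hPk => ⟨_, .c12 _ hPk⟩)
      exact ⟨t + 1, Nat.le_succ_of_le ht, by rw [step_of_c1 hstep hP]⟩
    · exact ⟨n, le_rfl, hcn⟩
    · obtain ⟨t, ht, hsc, hP, hstep⟩ := eventually e hfair .coord
        (fun s => s.cpc = .c21) n hcn
        (by
          intro k hk hPk l' hl' hsc' hst'
          cases l' with
          | coord => exact absurd rfl hl'
          | proc j => rw [(proc_frame hst').2.1]; exact hPk)
        (fun k hk hPk => ⟨_, .c21_22 _ hPk⟩)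
      have h' := step_of_c21 hstep hP
      obtain ⟨t2, ht2, hc2, -⟩ := hunblock (t + 1) (Nat.le_succ_of_le ht)
        (by rw [h'])
      obtain ⟨t3, ht3, hc3, -⟩ := hc3A (t2 + 1)
        (le_trans (Nat.le_succ_of_le ht) (Nat.le_succ_of_le ht2)) hc2
      exact ⟨t3, le_trans (le_trans (Nat.le_succ_of_le ht)
        (Nat.le_succ_of_le ht2)) ht3, hc3⟩
    · obtain ⟨t2, ht2, hc2, -⟩ := hunblock n le_rfl hcn
      obtain ⟨t3, ht3, hc3, -⟩ := hc3A (t2 + 1) (Nat.le_succ_of_le ht2) hc2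
      exact ⟨t3, le_trans (Nat.le_succ_of_le ht2) ht3, hc3⟩
    · obtain ⟨t3, ht3, hc3, -⟩ := hc3A n le_rfl hcn
      exact ⟨t3, ht3, hc3⟩
  -- iterate hc2A until p = i
  open Fin.NatCast in
  have hcyc : ∀ k : ℕ, ∀ m, n ≤ m → (e.states m).cpc = .c2 →
      (e.states m).p + (k : Fin N) = i →
      ∃ t, n ≤ t ∧ (e.states t).cpc = .c2 ∧ (e.states t).p = i := by
    intro k
    induction k with
    | zero => intro m hm hc hpk; exact ⟨m, hm, hc, by simpa using hpk⟩
    | succ k ih =>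
      intro m hm hc hpk
      obtain ⟨t, ht, hc', hp'⟩ := hc2A m hm hc
      refine ih t (le_trans hm ht) hc' ?_
      rw [hp', ← hpk]
      push_cast
      abel
  obtain ⟨t0, ht0, hc0⟩ := hreach
  obtain ⟨T, hT, hcT, hpT⟩ := hcyc ((i - (e.states t0).p).val) t0 ht0 hc0
    (by rw [Fin.cast_val_eq_self]; abel)
  -- now the coordinator goes c2 -> c21 -> c22, setting turn := i
  obtain ⟨t1, ht1, hsc1, hP1, hstep1⟩ := eventually e hfair .coord
    (fun s => s.cpc = .c2 ∧ s.p = i) T ⟨hcT, hpT⟩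
    (by
      intro k hk hPk l' hl' hsc' hst'
      cases l' with
      | coord => exact absurd rfl hl'
      | proc j =>
        obtain ⟨-, hcp, hpp, -⟩ := proc_frame hst'
        exact ⟨by rw [hcp]; exact hPk.1, by rw [hpp]; exact hPk.2⟩)
    (fun k hk hPk => by
      by_cases hw : (e.states k).flag (e.states k).p = .waiting
      · exact ⟨_, .c2_21 _ hPk.1 hw⟩
      · exact ⟨_, .c23 _ hPk.1 hw⟩)
  have hn1 : n ≤ t1 := le_trans hT ht1
  rcases step_of_c2 hstep1 hP1.1 with ⟨hw, -⟩ | ⟨-, h1'⟩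
  · exact absurd (by rw [hP1.2]; exact hflagi t1 hn1) hw
  · obtain ⟨t2, ht2, hsc2, hP2, hstep2⟩ := eventually e hfair .coord
      (fun s => s.cpc = .c21 ∧ s.p = i) (t1 + 1)
      (by rw [h1']; exact ⟨rfl, hP1.2⟩)
      (by
        intro k hk hPk l' hl' hsc' hst'
        cases l' with
        | coord => exact absurd rfl hl'
        | proc j =>
          obtain ⟨-, hcp, hpp, -⟩ := proc_frame hst'
          exact ⟨by rw [hcp]; exact hPk.1, by rw [hpp]; exact hPk.2⟩)
      (fun k hk hPk => ⟨_, .c21_22 _ hPk.1⟩)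
    have h2' := step_of_c21 hstep2 hP2.1
    exact hwin (t2 + 1)
      (le_trans hn1 (le_trans (Nat.le_succ_of_le le_rfl)
        (Nat.le_succ_of_le ht2)))
      (by rw [h2']; simp [hP2.2])
end

section
/- Mutual exclusion for the symmetric algorithm (extended form): in every reachable global state, no two distinct processes are simultaneously in the extended critical section, i.e., no two processes both have their program counters in [CS, 8). -/
/-!
Model of the symmetric mutual-exclusion algorithm (no coordinator).

Shared variables: `turn ∈ {0,…,N−1, THINKING, FREE}` (initially FREE) and
`flag : Fin N → {REMAINDER, WAITING, CANDIDATE}` (initially all REMAINDER,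
`flag[i]` writable only by process `i`).

Entry automaton for process `i` (program-counter states):
* `s1`   : set `flag[i] := WAITING`, go to `s2`;
* `s2`   : wait while `turn = THINKING`; if `turn = FREE` go to `s3`
           (beginning of the candidate phase); if `turn` is a process
           identifier, go to `s4`;
* `s3`   : set `flag[i] := CANDIDATE`, go to `s32` (state 3.2);
* `s32`  : repeat-loop test: if `turn = FREE ∧ flag[i] = CANDIDATE`
           go to `s33` (state 3.3), otherwise leave the loop to `s37`;
* `s33`  : set `nCandidates := 0`, `minCandidate := −1`, initialize the scan
           counter, go to `s34`;
* `s34`  : scan loop (states 3.4/3.4.1/3.4.2), `j` from `N−1` down to `0`: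
           if the scan is over, go to `s35`; otherwise inspect `flag[j]`:
           if it is CANDIDATE go to `s341` else decrement `j`;
* `s341` : set `nCandidates := nCandidates + 1`, `minCandidate := j`,
           decrement `j`, back to `s34`;
* `s35`  : if `turn = FREE ∧ nCandidates = 1` go to `s351` (state 3.5.1),
           otherwise go to `s36`;
* `s351` : set `turn := i`, go to `s352` (state 3.5.2);
* `s352` : go to `s36`;
* `s36`  : if `turn ≠ FREE ∨ minCandidate < i` set `flag[i] := WAITING`
           (state 3.6); in either case return to the repeat test `s32`;
* `s37`  : after the repeat ends, set `flag[i] := WAITING`, go to `s4`;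
* `s4`   : wait until `turn = i`, then enter the critical section `cs`.

Exit automaton for process `i`:
* `cs`   : set `turn := THINKING`, go to `s5` (state 5);
* `s5`   : set `flag[i] := REMAINDER`, `nextTurn := THINKING`, initialize the
           scan counter, go to `s6`;
* `s6`   : loop (states 6/6.1/6.2) with `j` over `i+1,…,N−1,0,…,i−1` while
           `nextTurn = THINKING`: if `flag[j] ≠ REMAINDER` set
           `nextTurn := j`; when the loop ends go to `s63` (state 6.3);
* `s63`  : if `nextTurn = THINKING` set `turn := FREE` else
           `turn := nextTurn`; go to `s8` (state 8).
-/

namespace Sym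

/-- Values of the shared variable `turn` (and of `nextTurn`). -/
inductive Turn (N : ℕ)
  | free
  | thinking
  | id : Fin N → Turn N
  deriving DecidableEq

inductive Flag
  | remainder | waiting | candidate
  deriving DecidableEq

/-- Program counter of a process. -/
inductive PC
  | s1 | s2 | s3 | s32 | s33 | s34 | s341 | s35 | s351 | s352 | s36 | s37
  | s4 | cs | s5 | s6 | s63 | s8
  deriving DecidableEq

/-- A global state: shared variables plus each process's program counter and
local variables (`cnt` is the loop counter `j`, reused by the candidate scan
and the exit scan). -/
structure St (N : ℕ) where
  turn : Turn N
  flag : Fin N → Flag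
  pc : Fin N → PC
  nCand : Fin N → ℕ
  minCand : Fin N → ℤ
  nextTurn : Fin N → Turn N
  cnt : Fin N → ℕ

/-- The initial global state. -/
def initSt (N : ℕ) : St N where
  turn := .free
  flag := fun _ => .remainder
  pc := fun _ => .s1
  nCand := fun _ => 0
  minCand := fun _ => 0
  nextTurn := fun _ => .thinking
  cnt := fun _ => 0

/-- In the exit scan of process `i`, the index examined when the counter is
`k` is `(i + k + 1) mod N`: the scan order is `i+1, …, N−1, 0, …, i−1`. -/
def nxt {N : ℕ} (i : Fin N) (k : ℕ) : Fin N :=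
  ⟨(i.val + k + 1) % N, Nat.mod_lt _ i.pos⟩

/-- One enabled transition of process `i`. -/
inductive Step {N : ℕ} : Fin N → St N → St N → Prop
  | t1 (s : St N) (i : Fin N) (h : s.pc i = .s1) :
      Step i s { s with flag := Function.update s.flag i .waiting,
                        pc := Function.update s.pc i .s2 }
  | t2free (s : St N) (i : Fin N) (h : s.pc i = .s2) (ht : s.turn = .free) :
      Step i s { s with pc := Function.update s.pc i .s3 }
  | t2id (s : St N) (i j : Fin N) (h : s.pc i = .s2) (ht : s.turn = .id j) :
      Step i s { s with pc := Function.update s.pc i .s4 }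
  | t3 (s : St N) (i : Fin N) (h : s.pc i = .s3) :
      Step i s { s with flag := Function.update s.flag i .candidate,
                        pc := Function.update s.pc i .s32 }
  | t32enter (s : St N) (i : Fin N) (h : s.pc i = .s32)
      (ht : s.turn = .free) (hf : s.flag i = .candidate) :
      Step i s { s with pc := Function.update s.pc i .s33 }
  | t32exit (s : St N) (i : Fin N) (h : s.pc i = .s32)
      (hc : ¬ (s.turn = .free ∧ s.flag i = .candidate)) :
      Step i s { s with pc := Function.update s.pc i .s37 }
  | t33 (s : St N) (i : Fin N) (h : s.pc i = .s33) :
      Step i s { s with nCand := Function.update s.nCand i 0,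
                        minCand := Function.update s.minCand i (-1),
                        cnt := Function.update s.cnt i N,
                        pc := Function.update s.pc i .s34 }
  | t34done (s : St N) (i : Fin N) (h : s.pc i = .s34) (hc : s.cnt i = 0) :
      Step i s { s with pc := Function.update s.pc i .s35 }
  | t34cand (s : St N) (i j : Fin N) (h : s.pc i = .s34) (hc : s.cnt i ≠ 0)
      (hj : (j : ℕ) = s.cnt i - 1) (hf : s.flag j = .candidate) :
      Step i s { s with pc := Function.update s.pc i .s341 }
  | t34nocand (s : St N) (i j : Fin N) (h : s.pc i = .s34) (hc : s.cnt i ≠ 0)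
      (hj : (j : ℕ) = s.cnt i - 1) (hf : s.flag j ≠ .candidate) :
      Step i s { s with cnt := Function.update s.cnt i (s.cnt i - 1),
                        pc := Function.update s.pc i .s34 }
  | t341 (s : St N) (i : Fin N) (h : s.pc i = .s341) :
      Step i s { s with nCand := Function.update s.nCand i (s.nCand i + 1),
                        minCand := Function.update s.minCand i ((s.cnt i : ℤ) - 1),
                        cnt := Function.update s.cnt i (s.cnt i - 1),
                        pc := Function.update s.pc i .s34 }
  | t35yes (s : St N) (i : Fin N) (h : s.pc i = .s35)
      (ht : s.turn = .free) (hn : s.nCand i = 1) :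
      Step i s { s with pc := Function.update s.pc i .s351 }
  | t35no (s : St N) (i : Fin N) (h : s.pc i = .s35)
      (hc : ¬ (s.turn = .free ∧ s.nCand i = 1)) :
      Step i s { s with pc := Function.update s.pc i .s36 }
  | t351 (s : St N) (i : Fin N) (h : s.pc i = .s351) :
      Step i s { s with turn := .id i, pc := Function.update s.pc i .s352 }
  | t352 (s : St N) (i : Fin N) (h : s.pc i = .s352) :
      Step i s { s with pc := Function.update s.pc i .s36 }
  | t36yes (s : St N) (i : Fin N) (h : s.pc i = .s36)
      (hc : s.turn ≠ .free ∨ s.minCand i < (i : ℤ)) :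
      Step i s { s with flag := Function.update s.flag i .waiting,
                        pc := Function.update s.pc i .s32 }
  | t36no (s : St N) (i : Fin N) (h : s.pc i = .s36)
      (hc : ¬ (s.turn ≠ .free ∨ s.minCand i < (i : ℤ))) :
      Step i s { s with pc := Function.update s.pc i .s32 }
  | t37 (s : St N) (i : Fin N) (h : s.pc i = .s37) :
      Step i s { s with flag := Function.update s.flag i .waiting,
                        pc := Function.update s.pc i .s4 }
  | t4 (s : St N) (i : Fin N) (h : s.pc i = .s4) (ht : s.turn = .id i) :
      Step i s { s with pc := Function.update s.pc i .cs }
  | tcs (s : St N) (i : Fin N) (h : s.pc i = .cs) :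
      Step i s { s with turn := .thinking, pc := Function.update s.pc i .s5 }
  | t5 (s : St N) (i : Fin N) (h : s.pc i = .s5) :
      Step i s { s with flag := Function.update s.flag i .remainder,
                        nextTurn := Function.update s.nextTurn i .thinking,
                        cnt := Function.update s.cnt i 0,
                        pc := Function.update s.pc i .s6 }
  | t6exit (s : St N) (i : Fin N) (h : s.pc i = .s6)
      (hc : s.nextTurn i ≠ .thinking ∨ s.cnt i = N - 1) :
      Step i s { s with pc := Function.update s.pc i .s63 }
  | t6found (s : St N) (i : Fin N) (h : s.pc i = .s6)
      (hnt : s.nextTurn i = .thinking) (hcnt : s.cnt i ≠ N - 1)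
      (hf : s.flag (nxt i (s.cnt i)) ≠ .remainder) :
      Step i s { s with
        nextTurn := Function.update s.nextTurn i (.id (nxt i (s.cnt i))),
        cnt := Function.update s.cnt i (s.cnt i + 1),
        pc := Function.update s.pc i .s6 }
  | t6notfound (s : St N) (i : Fin N) (h : s.pc i = .s6)
      (hnt : s.nextTurn i = .thinking) (hcnt : s.cnt i ≠ N - 1)
      (hf : s.flag (nxt i (s.cnt i)) = .remainder) :
      Step i s { s with cnt := Function.update s.cnt i (s.cnt i + 1),
                        pc := Function.update s.pc i .s6 }
  | t63free (s : St N) (i : Fin N) (h : s.pc i = .s63)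
      (hn : s.nextTurn i = .thinking) :
      Step i s { s with turn := .free, pc := Function.update s.pc i .s8 }
  | t63id (s : St N) (i b : Fin N) (h : s.pc i = .s63)
      (hn : s.nextTurn i = .id b) :
      Step i s { s with turn := .id b, pc := Function.update s.pc i .s8 }

/-- An execution: a sequence of global states starting from the initial
state, together with a schedule; at each instant either exactly one process
takes one of its enabled transitions, or (if `none` is scheduled) the state
stutters. -/
structure Exec (N : ℕ) where
  states : ℕ → St N
  sched : ℕ → Option (Fin N)
  init : states 0 = initSt N
  step : ∀ n, match sched n with
    | some i => Step i (states n) (states (n + 1))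
    | none => states (n + 1) = states n

/-- A process is enabled if it can take a transition. -/
def Enabled {N : ℕ} (i : Fin N) (s : St N) : Prop :=
  ∃ s', Step i s s'

/-- Weak fairness: a process whose next transition is continuously enabled
eventually takes it. -/
def Exec.Fair {N : ℕ} (e : Exec N) : Prop :=
  ∀ i n, (∀ m, n ≤ m → Enabled i (e.states m)) → ∃ m, n ≤ m ∧ e.sched m = some i

/-- A state is reachable if it occurs in some execution. -/
def Reachable {N : ℕ} (s : St N) : Prop :=
  ∃ e : Exec N, ∃ n, e.states n = s

/-- The extended critical section: program-counter states in `[CS, 8)`. -/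
def ExtCS : PC → Prop := fun p => p = .cs ∨ p = .s5 ∨ p = .s6 ∨ p = .s63

/-- Program-counter states in the interval `[3, 4]`: from entering the
candidate phase up to (and including) waiting at state 4. -/
def In34 : PC → Prop := fun p =>
  p = .s3 ∨ p = .s32 ∨ p = .s33 ∨ p = .s34 ∨ p = .s341 ∨ p = .s35 ∨
  p = .s351 ∨ p = .s352 ∨ p = .s36 ∨ p = .s37 ∨ p = .s4

/-- Position of `x` in the cyclic order `a+1, …, N−1, 0, …, a−1, a`
starting just after `a` (so `rank a (a+1) = 0` and `rank a a = N−1`). -/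
def rank {N : ℕ} (a x : Fin N) : ℕ := (x.val + N - a.val - 1) % N

end Sym


namespace Sym

/-- Scan region: states from the flag scan through the winner states. -/
def Sreg (p : PC) : Prop :=
  p = .s34 ∨ p = .s341 ∨ p = .s35 ∨ p = .s351 ∨ p = .s352

/-- `Pss p c j`: a scanner with program counter `p` and counter `c` has
already processed (or is currently counting) index `j`. -/
def Pss (p : PC) (c j : ℕ) : Prop :=
  (p = .s34 ∧ c ≤ j) ∨ (p = .s341 ∧ c ≤ j + 1) ∨ p = .s35 ∨ p = .s351 ∨ p = .s352

/-- Guaranteed lower bound on the final candidate count of a scanner at `p`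
with current count `n`, counter `c`, own index `i`. -/
def ncP (p : PC) (n c i : ℕ) : ℕ :=
  match p with
  | .s34 => n + (if c ≤ i then 0 else 1)
  | .s341 => n + 1 + (if c ≤ i + 1 then 0 else 1)
  | _ => n

/-- The inductive invariant. -/
structure Inv {N : ℕ} (s : St N) : Prop where
  cs_turn : ∀ i, s.pc i = .cs → s.turn = .id i
  exit_turn : ∀ i, (s.pc i = .s5 ∨ s.pc i = .s6 ∨ s.pc i = .s63) → s.turn = .thinking
  w1 : ∀ i, s.pc i = .s351 → s.turn = .free
  w2 : ∀ i, s.pc i = .s352 → s.turn = .id i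
  mutex : ∀ i j, ExtCS (s.pc i) → ExtCS (s.pc j) → i = j
  wnc : ∀ i, (s.pc i = .s351 ∨ s.pc i = .s352) → s.nCand i = 1
  cand : ∀ i, (s.pc i = .s33 ∨ s.pc i = .s34 ∨ s.pc i = .s341 ∨ s.pc i = .s35 ∨
      s.pc i = .s351 ∨ s.pc i = .s352 ∨ s.pc i = .s36) → s.flag i = .candidate
  selfc : ∀ i, (s.pc i = .s34 ∨ s.pc i = .s341) → s.cnt i ≤ i → 1 ≤ s.nCand i
  scan : ∀ i j : Fin N, i ≠ j → Sreg (s.pc i) → Sreg (s.pc j) →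
      Pss (s.pc i) (s.cnt i) j → Pss (s.pc j) (s.cnt j) i →
      2 ≤ ncP (s.pc i) (s.nCand i) (s.cnt i) i ∨ 2 ≤ ncP (s.pc j) (s.nCand j) (s.cnt j) j

theorem inv_init (N : ℕ) : Inv (initSt N) := by
  constructor <;> intro i <;> simp [initSt, ExtCS, Sreg, Pss]


theorem sreg_cand {p : PC} (h : Sreg p) :
    p = .s33 ∨ p = .s34 ∨ p = .s341 ∨ p = .s35 ∨ p = .s351 ∨ p = .s352 ∨ p = .s36 := by
  rcases h with rfl | rfl | rfl | rfl | rfl <;> simp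

/-- Master preservation lemma: all per-process fields updated at `i`,
shared `turn` set to `t'`. -/
theorem pres {N : ℕ} {s : St N} (I : Inv s) (i : Fin N)
    (t' : Turn N) (b : PC) (f' : Flag) (n' c' : ℕ) (mc' : ℤ) (nt' : Turn N)
    (A1 : b = .cs → t' = .id i)
    (A2 : b = .s5 ∨ b = .s6 ∨ b = .s63 → t' = .thinking)
    (A3 : b = .s351 → t' = .free)
    (A4 : b = .s352 → t' = .id i)
    (B1 : ∀ x, x ≠ i → s.pc x = .cs → t' = .id x)
    (B2 : ∀ x, x ≠ i → (s.pc x = .s5 ∨ s.pc x = .s6 ∨ s.pc x = .s63) → t' = .thinking)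
    (B3 : ∀ x, x ≠ i → s.pc x = .s351 → t' = .free)
    (B4 : ∀ x, x ≠ i → s.pc x = .s352 → t' = .id x)
    (C5 : ExtCS b → ∀ x, x ≠ i → ¬ ExtCS (s.pc x))
    (C6 : b = .s351 ∨ b = .s352 → n' = 1)
    (C7 : (b = .s33 ∨ b = .s34 ∨ b = .s341 ∨ b = .s35 ∨ b = .s351 ∨ b = .s352 ∨ b = .s36) →
        f' = .candidate)
    (C8 : b = .s34 ∨ b = .s341 → c' ≤ i → 1 ≤ n')
    (C9 : ∀ x, x ≠ i → Sreg b → Sreg (s.pc x) → Pss b c' x → Pss (s.pc x) (s.cnt x) i →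
        2 ≤ ncP b n' c' i ∨ 2 ≤ ncP (s.pc x) (s.nCand x) (s.cnt x) x) :
    Inv ⟨t', Function.update s.flag i f', Function.update s.pc i b,
        Function.update s.nCand i n', Function.update s.minCand i mc',
        Function.update s.nextTurn i nt', Function.update s.cnt i c'⟩ := by
  constructor
  all_goals dsimp only
  · intro x hx
    rcases eq_or_ne x i with rfl | hxi
    · rw [Function.update_self] at hx; exact A1 hx
    · rw [Function.update_of_ne hxi] at hx; exact B1 x hxi hx
  · intro x hx
    rcases eq_or_ne x i with rfl | hxi
    · rw [Function.update_self] at hx; exact A2 hx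
    · rw [Function.update_of_ne hxi] at hx; exact B2 x hxi hx
  · intro x hx
    rcases eq_or_ne x i with rfl | hxi
    · rw [Function.update_self] at hx; exact A3 hx
    · rw [Function.update_of_ne hxi] at hx; exact B3 x hxi hx
  · intro x hx
    rcases eq_or_ne x i with rfl | hxi
    · rw [Function.update_self] at hx; exact A4 hx
    · rw [Function.update_of_ne hxi] at hx; exact B4 x hxi hx
  · intro x y hx hy
    rcases eq_or_ne x i with rfl | hxi
    · rcases eq_or_ne y x with rfl | hyi
      · rfl
      · rw [Function.update_self] at hx; rw [Function.update_of_ne hyi] at hy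
        exact absurd hy (C5 hx y hyi)
    · rcases eq_or_ne y i with rfl | hyi
      · rw [Function.update_self] at hy; rw [Function.update_of_ne hxi] at hx
        exact absurd hx (C5 hy x hxi)
      · rw [Function.update_of_ne hxi] at hx; rw [Function.update_of_ne hyi] at hy
        exact I.mutex x y hx hy
  · intro x hx
    rcases eq_or_ne x i with rfl | hxi
    · rw [Function.update_self] at hx ⊢; exact C6 hx
    · rw [Function.update_of_ne hxi] at hx ⊢; exact I.wnc x hx
  · intro x hx
    rcases eq_or_ne x i with rfl | hxi
    · rw [Function.update_self] at hx ⊢; exact C7 hx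
    · rw [Function.update_of_ne hxi] at hx ⊢; exact I.cand x hx
  · intro x hx hc
    rcases eq_or_ne x i with rfl | hxi
    · rw [Function.update_self] at hx hc ⊢; exact C8 hx hc
    · rw [Function.update_of_ne hxi] at hx hc ⊢; exact I.selfc x hx hc
  · intro x y hxy hSx hSy hPx hPy
    rcases eq_or_ne x i with rfl | hxi
    · have hyi : y ≠ x := fun e => hxy e.symm
      rw [Function.update_self] at hSx
      rw [Function.update_of_ne hyi] at hSy
      simp only [Function.update_self] at hPx
      simp only [Function.update_of_ne hyi] at hPy
      simp only [Function.update_self, Function.update_of_ne hyi]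
      exact C9 y hyi hSx hSy hPx hPy
    · rcases eq_or_ne y i with rfl | hyi
      · rw [Function.update_self] at hSy
        rw [Function.update_of_ne hxi] at hSx
        simp only [Function.update_self] at hPy
        simp only [Function.update_of_ne hxi] at hPx
        simp only [Function.update_self, Function.update_of_ne hxi]
        exact (C9 x hxi hSy hSx hPy hPx).symm
      · rw [Function.update_of_ne hxi] at hSx
        rw [Function.update_of_ne hyi] at hSy
        simp only [Function.update_of_ne hxi] at hPx
        simp only [Function.update_of_ne hyi] at hPy
        simp only [Function.update_of_ne hxi, Function.update_of_ne hyi]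
        exact I.scan x y hxy hSx hSy hPx hPy

theorem inv_step {N : ℕ} {i : Fin N} {s s' : St N}
    (hst : Step i s s') (I : Inv s) : Inv s' := by
  cases hst with
  | t1 s i h =>
    simpa [Function.update_eq_self] using
      pres I i s.turn .s2 .waiting (s.nCand i) (s.cnt i) (s.minCand i) (s.nextTurn i)
        (by simp) (by simp) (by simp) (by simp)
        (fun x _ hx => I.cs_turn x hx) (fun x _ hx => I.exit_turn x hx)
        (fun x _ hx => I.w1 x hx) (fun x _ hx => I.w2 x hx)
        (by intro hb; simp [ExtCS] at hb) (by simp) (by simp) (by simp)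
        (by intro x _ hS; simp [Sreg] at hS)
  | t2free s i h ht =>
    simpa [Function.update_eq_self] using
      pres I i s.turn .s3 (s.flag i) (s.nCand i) (s.cnt i) (s.minCand i) (s.nextTurn i)
        (by simp) (by simp) (by simp) (by simp)
        (fun x _ hx => I.cs_turn x hx) (fun x _ hx => I.exit_turn x hx)
        (fun x _ hx => I.w1 x hx) (fun x _ hx => I.w2 x hx)
        (by intro hb; simp [ExtCS] at hb) (by simp) (by simp) (by simp)
        (by intro x _ hS; simp [Sreg] at hS)
  | t2id s i j h ht =>
    simpa [Function.update_eq_self] using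
      pres I i s.turn .s4 (s.flag i) (s.nCand i) (s.cnt i) (s.minCand i) (s.nextTurn i)
        (by simp) (by simp) (by simp) (by simp)
        (fun x _ hx => I.cs_turn x hx) (fun x _ hx => I.exit_turn x hx)
        (fun x _ hx => I.w1 x hx) (fun x _ hx => I.w2 x hx)
        (by intro hb; simp [ExtCS] at hb) (by simp) (by simp) (by simp)
        (by intro x _ hS; simp [Sreg] at hS)
  | t3 s i h =>
    simpa [Function.update_eq_self] using
      pres I i s.turn .s32 .candidate (s.nCand i) (s.cnt i) (s.minCand i) (s.nextTurn i)
        (by simp) (by simp) (by simp) (by simp)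
        (fun x _ hx => I.cs_turn x hx) (fun x _ hx => I.exit_turn x hx)
        (fun x _ hx => I.w1 x hx) (fun x _ hx => I.w2 x hx)
        (by intro hb; simp [ExtCS] at hb) (by simp) (by simp) (by simp)
        (by intro x _ hS; simp [Sreg] at hS)
  | t32enter s i h ht hf =>
    simpa [Function.update_eq_self] using
      pres I i s.turn .s33 (s.flag i) (s.nCand i) (s.cnt i) (s.minCand i) (s.nextTurn i)
        (by simp) (by simp) (by simp) (by simp)
        (fun x _ hx => I.cs_turn x hx) (fun x _ hx => I.exit_turn x hx)
        (fun x _ hx => I.w1 x hx) (fun x _ hx => I.w2 x hx)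
        (by intro hb; simp [ExtCS] at hb) (by simp) (fun _ => hf) (by simp)
        (by intro x _ hS; simp [Sreg] at hS)
  | t32exit s i h hc =>
    simpa [Function.update_eq_self] using
      pres I i s.turn .s37 (s.flag i) (s.nCand i) (s.cnt i) (s.minCand i) (s.nextTurn i)
        (by simp) (by simp) (by simp) (by simp)
        (fun x _ hx => I.cs_turn x hx) (fun x _ hx => I.exit_turn x hx)
        (fun x _ hx => I.w1 x hx) (fun x _ hx => I.w2 x hx)
        (by intro hb; simp [ExtCS] at hb) (by simp) (by simp) (by simp)
        (by intro x _ hS; simp [Sreg] at hS)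
  | t33 s i h =>
    simpa [Function.update_eq_self] using
      pres I i s.turn .s34 (s.flag i) 0 N (-1) (s.nextTurn i)
        (by simp) (by simp) (by simp) (by simp)
        (fun x _ hx => I.cs_turn x hx) (fun x _ hx => I.exit_turn x hx)
        (fun x _ hx => I.w1 x hx) (fun x _ hx => I.w2 x hx)
        (by intro hb; simp [ExtCS] at hb) (by simp)
        (fun _ => I.cand i (Or.inl h))
        (by intro _ hle; have := i.isLt; omega)
        (by intro x _ _ _ hPx _; exfalso
            have hx := x.isLt
            simp [Pss] at hPx
            omega)
  | t34done s i h hc =>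
    simpa [Function.update_eq_self] using
      pres I i s.turn .s35 (s.flag i) (s.nCand i) (s.cnt i) (s.minCand i) (s.nextTurn i)
        (by simp) (by simp) (by simp) (by simp)
        (fun x _ hx => I.cs_turn x hx) (fun x _ hx => I.exit_turn x hx)
        (fun x _ hx => I.w1 x hx) (fun x _ hx => I.w2 x hx)
        (by intro hb; simp [ExtCS] at hb) (by simp)
        (fun _ => I.cand i (Or.inr (Or.inl h))) (by simp)
        (by intro x hxi _ hSx _ hPy
            have h2 := I.scan i x (Ne.symm hxi) (by simp [Sreg, h]) hSx
              (by simp [Pss, h, hc]) hPy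
            simpa [ncP, h, hc] using h2)
  | t34cand s i j h hc hj hf =>
    simpa [Function.update_eq_self] using
      pres I i s.turn .s341 (s.flag i) (s.nCand i) (s.cnt i) (s.minCand i) (s.nextTurn i)
        (by simp) (by simp) (by simp) (by simp)
        (fun x _ hx => I.cs_turn x hx) (fun x _ hx => I.exit_turn x hx)
        (fun x _ hx => I.w1 x hx) (fun x _ hx => I.w2 x hx)
        (by intro hb; simp [ExtCS] at hb) (by simp)
        (fun _ => I.cand i (Or.inr (Or.inl h)))
        (fun _ hle => I.selfc i (Or.inl h) hle)
        (by intro x hxi _ hSx hPx hPy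
            have hxne : (x : ℕ) ≠ (i : ℕ) := fun e => hxi (Fin.ext e)
            have hPx' : s.cnt i ≤ (x : ℕ) + 1 := by simpa [Pss] using hPx
            by_cases hcx : s.cnt i ≤ (x : ℕ)
            · have h2 := I.scan i x (Ne.symm hxi) (by simp [Sreg, h]) hSx
                (by simp [Pss, h]; exact hcx) hPy
              rcases h2 with h2 | h2
              · left
                simp only [h, ncP] at h2
                simp only [ncP]
                split_ifs at h2 ⊢ <;> omega
              · exact Or.inr h2
            · left
              have hself := I.selfc i (Or.inl h)
              simp only [ncP]
              split_ifs with hcc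
              · have : 1 ≤ s.nCand i := hself (by omega)
                omega
              · omega)
  | t34nocand s i j h hc hj hf =>
    simpa [Function.update_eq_self] using
      pres I i s.turn .s34 (s.flag i) (s.nCand i) (s.cnt i - 1) (s.minCand i) (s.nextTurn i)
        (by simp) (by simp) (by simp) (by simp)
        (fun x _ hx => I.cs_turn x hx) (fun x _ hx => I.exit_turn x hx)
        (fun x _ hx => I.w1 x hx) (fun x _ hx => I.w2 x hx)
        (by intro hb; simp [ExtCS] at hb) (by simp)
        (fun _ => I.cand i (Or.inr (Or.inl h)))
        (by intro _ hle
            by_cases hci : s.cnt i ≤ (i : ℕ)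
            · exact I.selfc i (Or.inl h) hci
            · exfalso
              have hmi : j = i := Fin.ext (by omega)
              exact hf (by rw [hmi]; exact I.cand i (Or.inr (Or.inl h))))
        (by intro x hxi _ hSx hPx hPy
            have hPx' : s.cnt i - 1 ≤ (x : ℕ) := by simpa [Pss] using hPx
            by_cases hcx : s.cnt i ≤ (x : ℕ)
            · have hci : s.cnt i ≠ (i : ℕ) + 1 := by
                intro e
                have hmi : j = i := Fin.ext (by omega)
                exact hf (by rw [hmi]; exact I.cand i (Or.inr (Or.inl h)))
              have h2 := I.scan i x (Ne.symm hxi) (by simp [Sreg, h]) hSx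
                (by simp [Pss, h]; exact hcx) hPy
              rcases h2 with h2 | h2
              · left
                simp only [h, ncP] at h2
                simp only [ncP]
                split_ifs at h2 ⊢ <;> omega
              · exact Or.inr h2
            · exfalso
              have hxm : x = j := Fin.ext (by omega)
              exact hf (by rw [← hxm]; exact I.cand x (sreg_cand hSx)))
  | t341 s i h =>
    simpa [Function.update_eq_self] using
      pres I i s.turn .s34 (s.flag i) (s.nCand i + 1) (s.cnt i - 1) ((s.cnt i : ℤ) - 1)
        (s.nextTurn i)
        (by simp) (by simp) (by simp) (by simp)
        (fun x _ hx => I.cs_turn x hx) (fun x _ hx => I.exit_turn x hx)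
        (fun x _ hx => I.w1 x hx) (fun x _ hx => I.w2 x hx)
        (by intro hb; simp [ExtCS] at hb) (by simp)
        (fun _ => I.cand i (Or.inr (Or.inr (Or.inl h))))
        (by intro _ _; omega)
        (by intro x hxi _ hSx hPx hPy
            have hPx' : s.cnt i - 1 ≤ (x : ℕ) := by simpa [Pss] using hPx
            have h2 := I.scan i x (Ne.symm hxi) (by simp [Sreg, h]) hSx
              (by simp [Pss, h]; omega) hPy
            rcases h2 with h2 | h2
            · left
              simp only [h, ncP] at h2
              simp only [ncP]
              split_ifs at h2 ⊢ <;> omega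
            · exact Or.inr h2)
  | t35yes s i h ht hn =>
    simpa [Function.update_eq_self] using
      pres I i s.turn .s351 (s.flag i) (s.nCand i) (s.cnt i) (s.minCand i) (s.nextTurn i)
        (by simp) (by simp) (fun _ => ht) (by simp)
        (fun x _ hx => I.cs_turn x hx) (fun x _ hx => I.exit_turn x hx)
        (fun x _ hx => I.w1 x hx) (fun x _ hx => I.w2 x hx)
        (by intro hb; simp [ExtCS] at hb) (fun _ => hn)
        (fun _ => I.cand i (Or.inr (Or.inr (Or.inr (Or.inl h))))) (by simp)
        (by intro x hxi _ hSx _ hPy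
            have h2 := I.scan i x (Ne.symm hxi) (by simp [Sreg, h]) hSx
              (by simp [Pss, h]) hPy
            simpa [ncP, h] using h2)
  | t35no s i h hc =>
    simpa [Function.update_eq_self] using
      pres I i s.turn .s36 (s.flag i) (s.nCand i) (s.cnt i) (s.minCand i) (s.nextTurn i)
        (by simp) (by simp) (by simp) (by simp)
        (fun x _ hx => I.cs_turn x hx) (fun x _ hx => I.exit_turn x hx)
        (fun x _ hx => I.w1 x hx) (fun x _ hx => I.w2 x hx)
        (by intro hb; simp [ExtCS] at hb) (by simp)
        (fun _ => I.cand i (Or.inr (Or.inr (Or.inr (Or.inl h))))) (by simp)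
        (by intro x _ hS; simp [Sreg] at hS)
  | t351 s i h =>
    simpa [Function.update_eq_self] using
      pres I i (.id i) .s352 (s.flag i) (s.nCand i) (s.cnt i) (s.minCand i) (s.nextTurn i)
        (by simp) (by simp) (by simp) (fun _ => rfl)
        (by intro x hxi hx
            have h1 := I.cs_turn x hx
            rw [I.w1 i h] at h1
            exact absurd h1 (by simp))
        (by intro x hxi hx
            have h1 := I.exit_turn x hx
            rw [I.w1 i h] at h1
            exact absurd h1 (by simp))
        (by intro x hxi hx
            exfalso
            have e1 := I.wnc i (Or.inl h)
            have e2 := I.wnc x (Or.inl hx)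
            have h2 := I.scan i x (Ne.symm hxi) (by simp [Sreg, h]) (by simp [Sreg, hx])
              (by simp [Pss, h]) (by simp [Pss, hx])
            simp only [h, hx, ncP] at h2
            omega)
        (by intro x hxi hx
            have h1 := I.w2 x hx
            rw [I.w1 i h] at h1
            exact absurd h1 (by simp))
        (by intro hb; simp [ExtCS] at hb)
        (fun _ => I.wnc i (Or.inl h))
        (fun _ => I.cand i (Or.inr (Or.inr (Or.inr (Or.inr (Or.inl h))))))
        (by simp)
        (by intro x hxi _ hSx _ hPy
            have h2 := I.scan i x (Ne.symm hxi) (by simp [Sreg, h]) hSx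
              (by simp [Pss, h]) hPy
            simpa [ncP, h] using h2)
  | t352 s i h =>
    simpa [Function.update_eq_self] using
      pres I i s.turn .s36 (s.flag i) (s.nCand i) (s.cnt i) (s.minCand i) (s.nextTurn i)
        (by simp) (by simp) (by simp) (by simp)
        (fun x _ hx => I.cs_turn x hx) (fun x _ hx => I.exit_turn x hx)
        (fun x _ hx => I.w1 x hx) (fun x _ hx => I.w2 x hx)
        (by intro hb; simp [ExtCS] at hb) (by simp)
        (fun _ => I.cand i (Or.inr (Or.inr (Or.inr (Or.inr (Or.inr (Or.inl h)))))))
        (by simp)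
        (by intro x _ hS; simp [Sreg] at hS)
  | t36yes s i h hc =>
    simpa [Function.update_eq_self] using
      pres I i s.turn .s32 .waiting (s.nCand i) (s.cnt i) (s.minCand i) (s.nextTurn i)
        (by simp) (by simp) (by simp) (by simp)
        (fun x _ hx => I.cs_turn x hx) (fun x _ hx => I.exit_turn x hx)
        (fun x _ hx => I.w1 x hx) (fun x _ hx => I.w2 x hx)
        (by intro hb; simp [ExtCS] at hb) (by simp) (by simp) (by simp)
        (by intro x _ hS; simp [Sreg] at hS)
  | t36no s i h hc =>
    simpa [Function.update_eq_self] using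
      pres I i s.turn .s32 (s.flag i) (s.nCand i) (s.cnt i) (s.minCand i) (s.nextTurn i)
        (by simp) (by simp) (by simp) (by simp)
        (fun x _ hx => I.cs_turn x hx) (fun x _ hx => I.exit_turn x hx)
        (fun x _ hx => I.w1 x hx) (fun x _ hx => I.w2 x hx)
        (by intro hb; simp [ExtCS] at hb) (by simp) (by simp) (by simp)
        (by intro x _ hS; simp [Sreg] at hS)
  | t37 s i h =>
    simpa [Function.update_eq_self] using
      pres I i s.turn .s4 .waiting (s.nCand i) (s.cnt i) (s.minCand i) (s.nextTurn i)
        (by simp) (by simp) (by simp) (by simp)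
        (fun x _ hx => I.cs_turn x hx) (fun x _ hx => I.exit_turn x hx)
        (fun x _ hx => I.w1 x hx) (fun x _ hx => I.w2 x hx)
        (by intro hb; simp [ExtCS] at hb) (by simp) (by simp) (by simp)
        (by intro x _ hS; simp [Sreg] at hS)
  | t4 s i h ht =>
    simpa [Function.update_eq_self] using
      pres I i s.turn .cs (s.flag i) (s.nCand i) (s.cnt i) (s.minCand i) (s.nextTurn i)
        (fun _ => ht) (by simp) (by simp) (by simp)
        (fun x _ hx => I.cs_turn x hx) (fun x _ hx => I.exit_turn x hx)
        (fun x _ hx => I.w1 x hx) (fun x _ hx => I.w2 x hx)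
        (by intro _ x hxi hEx
            rcases hEx with hx | hx
            · have h1 := I.cs_turn x hx
              rw [ht] at h1
              injection h1 with e
              exact hxi e.symm
            · have h1 := I.exit_turn x hx
              rw [ht] at h1
              exact absurd h1 (by simp))
        (by simp) (by simp) (by simp)
        (by intro x _ hS; simp [Sreg] at hS)
  | tcs s i h =>
    simpa [Function.update_eq_self] using
      pres I i .thinking .s5 (s.flag i) (s.nCand i) (s.cnt i) (s.minCand i) (s.nextTurn i)
        (by simp) (fun _ => rfl) (by simp) (by simp)
        (by intro x hxi hx
            exact absurd (I.mutex x i (Or.inl hx) (Or.inl h)) hxi)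
        (by intro x hxi hx
            exact absurd (I.mutex x i (Or.inr hx) (Or.inl h)) hxi)
        (by intro x hxi hx
            have h1 := I.w1 x hx
            rw [I.cs_turn i h] at h1
            exact absurd h1 (by simp))
        (by intro x hxi hx
            have h1 := I.w2 x hx
            rw [I.cs_turn i h] at h1
            injection h1 with e
            exact absurd e.symm hxi)
        (by intro _ x hxi hEx
            exact hxi (I.mutex x i hEx (Or.inl h)))
        (by simp) (by simp) (by simp)
        (by intro x _ hS; simp [Sreg] at hS)
  | t5 s i h =>
    simpa [Function.update_eq_self] using
      pres I i s.turn .s6 .remainder (s.nCand i) 0 (s.minCand i) .thinking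
        (by simp) (fun _ => I.exit_turn i (Or.inl h)) (by simp) (by simp)
        (fun x _ hx => I.cs_turn x hx) (fun x _ hx => I.exit_turn x hx)
        (fun x _ hx => I.w1 x hx) (fun x _ hx => I.w2 x hx)
        (by intro _ x hxi hEx
            exact hxi (I.mutex x i hEx (Or.inr (Or.inl h))))
        (by simp) (by simp) (by simp)
        (by intro x _ hS; simp [Sreg] at hS)
  | t6exit s i h hc =>
    simpa [Function.update_eq_self] using
      pres I i s.turn .s63 (s.flag i) (s.nCand i) (s.cnt i) (s.minCand i) (s.nextTurn i)
        (by simp) (fun _ => I.exit_turn i (Or.inr (Or.inl h))) (by simp) (by simp)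
        (fun x _ hx => I.cs_turn x hx) (fun x _ hx => I.exit_turn x hx)
        (fun x _ hx => I.w1 x hx) (fun x _ hx => I.w2 x hx)
        (by intro _ x hxi hEx
            exact hxi (I.mutex x i hEx (Or.inr (Or.inr (Or.inl h)))))
        (by simp) (by simp) (by simp)
        (by intro x _ hS; simp [Sreg] at hS)
  | t6found s i h hnt hcnt hf =>
    simpa [Function.update_eq_self] using
      pres I i s.turn .s6 (s.flag i) (s.nCand i) (s.cnt i + 1) (s.minCand i)
        (.id (nxt i (s.cnt i)))
        (by simp) (fun _ => I.exit_turn i (Or.inr (Or.inl h))) (by simp) (by simp)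
        (fun x _ hx => I.cs_turn x hx) (fun x _ hx => I.exit_turn x hx)
        (fun x _ hx => I.w1 x hx) (fun x _ hx => I.w2 x hx)
        (by intro _ x hxi hEx
            exact hxi (I.mutex x i hEx (Or.inr (Or.inr (Or.inl h)))))
        (by simp) (by simp) (by simp)
        (by intro x _ hS; simp [Sreg] at hS)
  | t6notfound s i h hnt hcnt hf =>
    simpa [Function.update_eq_self] using
      pres I i s.turn .s6 (s.flag i) (s.nCand i) (s.cnt i + 1) (s.minCand i) (s.nextTurn i)
        (by simp) (fun _ => I.exit_turn i (Or.inr (Or.inl h))) (by simp) (by simp)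
        (fun x _ hx => I.cs_turn x hx) (fun x _ hx => I.exit_turn x hx)
        (fun x _ hx => I.w1 x hx) (fun x _ hx => I.w2 x hx)
        (by intro _ x hxi hEx
            exact hxi (I.mutex x i hEx (Or.inr (Or.inr (Or.inl h)))))
        (by simp) (by simp) (by simp)
        (by intro x _ hS; simp [Sreg] at hS)
  | t63free s i h hn =>
    simpa [Function.update_eq_self] using
      pres I i .free .s8 (s.flag i) (s.nCand i) (s.cnt i) (s.minCand i) (s.nextTurn i)
        (by simp) (by simp) (by simp) (by simp)
        (by intro x hxi hx
            have h1 := I.cs_turn x hx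
            rw [I.exit_turn i (Or.inr (Or.inr h))] at h1
            exact absurd h1 (by simp))
        (by intro x hxi hx
            exact absurd
              (I.mutex x i (Or.inr hx) (Or.inr (Or.inr (Or.inr h)))) hxi)
        (fun x _ _ => rfl)
        (by intro x hxi hx
            have h1 := I.w2 x hx
            rw [I.exit_turn i (Or.inr (Or.inr h))] at h1
            exact absurd h1 (by simp))
        (by intro hb; simp [ExtCS] at hb)
        (by simp) (by simp) (by simp)
        (by intro x _ hS; simp [Sreg] at hS)
  | t63id s i w h hn =>
    simpa [Function.update_eq_self] using
      pres I i (.id w) .s8 (s.flag i) (s.nCand i) (s.cnt i) (s.minCand i) (s.nextTurn i)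
        (by simp) (by simp) (by simp) (by simp)
        (by intro x hxi hx
            have h1 := I.cs_turn x hx
            rw [I.exit_turn i (Or.inr (Or.inr h))] at h1
            exact absurd h1 (by simp))
        (by intro x hxi hx
            exact absurd
              (I.mutex x i (Or.inr hx) (Or.inr (Or.inr (Or.inr h)))) hxi)
        (by intro x hxi hx
            have h1 := I.w1 x hx
            rw [I.exit_turn i (Or.inr (Or.inr h))] at h1
            exact absurd h1 (by simp))
        (by intro x hxi hx
            have h1 := I.w2 x hx
            rw [I.exit_turn i (Or.inr (Or.inr h))] at h1
            exact absurd h1 (by simp))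
        (by intro hb; simp [ExtCS] at hb)
        (by simp) (by simp) (by simp)
        (by intro x _ hS; simp [Sreg] at hS)

theorem inv_reach {N : ℕ} {s : St N} (hs : Reachable s) : Inv s := by
  obtain ⟨e, n, rfl⟩ := hs
  induction n with
  | zero => rw [e.init]; exact inv_init N
  | succ n ih =>
    have h := e.step n
    rcases hsc : e.sched n with _ | i <;> rw [hsc] at h
    · simp only at h; rwa [h]
    · exact inv_step h ih

end Sym

open Sym in
/-- **Mutual exclusion for the symmetric algorithm (extended form).**
In every reachable global state, no two distinct processes are
simultaneously in the extended critical section `[CS, 8)`. -/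
theorem sym_mutual_exclusion_extended {N : ℕ} (s : St N) (hs : Reachable s)
    (i j : Fin N) (hi : ExtCS (s.pc i)) (hj : ExtCS (s.pc j)) : i = j :=
  (Sym.inv_reach hs).mutex i j hi hj
end
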